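/- Let u : ℝⁿ → ℝ be a convex function such that the set {u = 0} contains the line {t e' : t ∈ ℝ} for some unit vector e'. Then u is invariant under translations along e': u(x + t e') = u(x) for all x ∈ ℝⁿ and all t ∈ ℝ. -/

import Mathlib

/-- **Lemma 5.24**: if `u : ℝⁿ → ℝ` is convex and its zero set contains the whole line
`{t e' : t ∈ ℝ}` for a unit vector `e'`, then `u` is invariant under translations
along `e'`: `u(x + t e') = u(x)` for all `x ∈ ℝⁿ` and `t ∈ ℝ`. -/
theorem stmt_19 (n : ℕ) (u : EuclideanSpace ℝ (Fin n) → ℝ)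
    (hconv : ConvexOn ℝ Set.univ u)
    (e' : EuclideanSpace ℝ (Fin n)) (he' : ‖e'‖ = 1)
    (hline : ∀ t : ℝ, u (t • e') = 0) :
    ∀ (x : EuclideanSpace ℝ (Fin n)) (t : ℝ), u (x + t • e') = u x := by
  have hcont : Continuous u := by
    exact continuousOn_univ.1 (hconv.continuousOn isOpen_univ)
  have key : ∀ (x : EuclideanSpace ℝ (Fin n)) (t : ℝ), u (x + t • e') ≤ u x := by
    intro x t
    set f : ℝ → ℝ := fun s => u ((1 - s) • x + t • e') - (1 - s) * u x with hf
    have hfcont : Continuous f := by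
      apply Continuous.sub
      · exact hcont.comp (by continuity)
      · continuity
    have hle : ∀ s ∈ Set.Ioc (0:ℝ) 1, f s ≤ 0 := by
      intro s hs
      have hs0 : s ≠ 0 := ne_of_gt hs.1
      have h1 : (1 - s) • x + t • e' = (1 - s) • x + s • ((t / s) • e') := by
        rw [smul_smul, mul_div_cancel₀ _ hs0]
      have := hconv.2 (Set.mem_univ x) (Set.mem_univ ((t / s) • e'))
        (by linarith [hs.2] : (0:ℝ) ≤ 1 - s) (le_of_lt hs.1) (by ring)
      rw [hline (t / s)] at this
      simp only [hf]
      rw [h1]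
      simpa using this
    have htend : Filter.Tendsto f (nhdsWithin 0 (Set.Ioi 0)) (nhds (f 0)) :=
      (hfcont.tendsto 0).mono_left nhdsWithin_le_nhds
    have hmem : Set.Ioc (0:ℝ) 1 ∈ nhdsWithin (0:ℝ) (Set.Ioi 0) := by
      apply mem_nhdsWithin.2
      exact ⟨Set.Iio 1, isOpen_Iio, by norm_num, fun y hy => ⟨hy.2, le_of_lt hy.1⟩⟩
    have hf0 : f 0 ≤ 0 :=
      le_of_tendsto htend (Filter.eventually_iff_exists_mem.2 ⟨_, hmem, hle⟩)
    have : f 0 = u (x + t • e') - u x := by simp [hf]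
    linarith [this ▸ hf0]
  intro x t
  refine le_antisymm (key x t) ?_
  have := key (x + t • e') (-t)
  simpa [add_assoc, ← add_smul] using this
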